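/- Let φ : ℂ → ℂ be compactly supported and Lipschitz continuous. Then there exist constants C > 0 and ω > 0 such that for all ε ∈ (0,1], | ∫_ℂ ε/(|z|²+ε)² φ(z) dλ(z) − π φ(0) | ≤ C ε^ω. In particular one may take ω = 1/2. -/

import Mathlib

open MeasureTheory Set


lemma radial (f : ℝ → ℝ) : ∫ z : ℂ, f ‖z‖ = (2*Real.pi) * ∫ y in Ioi (0:ℝ), y * f y := by
  rw [MeasureTheory.integral_fun_norm_addHaar volume f]
  simp only [Complex.finrank_real_complex, Complex.volume_ball, pow_one, smul_eq_mul,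
    ENNReal.toReal_mul, ENNReal.ofReal_one, one_pow, ENNReal.toReal_one, ENNReal.coe_toReal,
    NNReal.coe_real_pi, nsmul_eq_mul, Nat.cast_ofNat, show (2-1:ℕ) = 1 from rfl]
  simp [Measure.real, Complex.volume_ball]
  ring

lemma key1 {ε : ℝ} (hε : 0 < ε) (hε1 : ε ≤ 1) (y : ℝ) : ε * (1 + y^2) ≤ y^2 + ε := by nlinarith [sq_nonneg y]

lemma intOn1 {ε : ℝ} (hε : 0 < ε) (hε1 : ε ≤ 1) :
    IntegrableOn (fun y : ℝ => y * (ε / (y^2+ε)^2)) (Ioi 0) := by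
  refine ((integrable_inv_one_add_sq.const_mul (1/(2*ε))).integrableOn).mono' ?_ ?_
  · exact (Continuous.mul continuous_id (continuous_const.div
      (((continuous_pow 2).add continuous_const).pow 2) (fun y => show (y^2+ε)^2 ≠ 0 by positivity))).aestronglyMeasurable
  · refine (ae_restrict_iff' measurableSet_Ioi).2 (ae_of_all _ fun y hy => ?_)
    have hy0 : 0 < y := hy
    have h1 : (0:ℝ) < (y^2+ε)^2 := by positivity
    rw [Real.norm_eq_abs, abs_of_nonneg (by positivity)]
    have : y * (ε / (y^2+ε)^2) = ε * y / (y^2+ε)^2 := by ring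
    rw [this, div_le_iff₀ h1]
    have h2 : 2*ε*y ≤ y^2 + ε := by nlinarith [sq_nonneg (y - ε)]
    have h3 := key1 hε hε1 y
    have h4 := mul_le_mul h2 h3 (by positivity) (by positivity)
    have h5 : (0:ℝ) < 1 + y^2 := by positivity
    have h6 : 1/(2*ε) * ((1:ℝ)+y^2)⁻¹ * (y^2+ε)^2 = (y^2+ε)^2 / (2*ε*(1+y^2)) := by
      field_simp
    rw [h6, le_div_iff₀ (by positivity)]
    nlinarith [h4]

lemma I1 {ε : ℝ} (hε : 0 < ε) (hε1 : ε ≤ 1) :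
    ∫ y in Ioi (0:ℝ), y * (ε / (y^2+ε)^2) = 1/2 := by
  have hF : ∀ y ∈ Ioi (0:ℝ), HasDerivAt (fun y : ℝ => -ε/2 * ((y^2+ε)⁻¹))
      (y * (ε / (y^2+ε)^2)) y := by
    intro y _
    have hu : HasDerivAt (fun y : ℝ => y^2+ε) (2*y) y := by
      simpa using (hasDerivAt_pow 2 y).add_const ε
    have h2 := (hu.inv (by positivity)).const_mul (-ε/2)
    refine h2.congr_deriv ?_
    field_simp
  have htend : Filter.Tendsto (fun y : ℝ => -ε/2 * ((y^2+ε)⁻¹)) Filter.atTop (nhds 0) := by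
    have h1 : Filter.Tendsto (fun y : ℝ => y^2+ε) Filter.atTop Filter.atTop :=
      Filter.tendsto_atTop_add_const_right _ ε (Filter.tendsto_pow_atTop two_ne_zero)
    simpa using (tendsto_inv_atTop_zero.comp h1).const_mul (-ε/2)
  have hcont : ContinuousWithinAt (fun y : ℝ => -ε/2 * ((y^2+ε)⁻¹)) (Ici 0) 0 := by
    have hc : Continuous (fun y : ℝ => -ε/2 * ((y^2+ε)⁻¹)) := by
      have hne : ∀ y : ℝ, y^2+ε ≠ 0 := fun y => by positivity
      exact continuous_const.mul (((continuous_pow 2).add continuous_const).inv₀ hne)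
    exact hc.continuousWithinAt
  rw [MeasureTheory.integral_Ioi_of_hasDerivAt_of_tendsto hcont hF (intOn1 hε hε1) htend]
  norm_num
  field_simp

lemma le_sqrt_add {ε : ℝ} (hε : 0 < ε) (y : ℝ) (hy : 0 ≤ y) :
    y ≤ (y^2+ε) ^ ((1:ℝ)/2) := by
  rw [← Real.sqrt_eq_rpow]
  exact Real.le_sqrt_of_sq_le (by nlinarith)

lemma intOn2 {ε : ℝ} (hε : 0 < ε) (hε1 : ε ≤ 1) :
    IntegrableOn (fun y : ℝ => y * (ε * (y^2+ε) ^ (-3/2 : ℝ))) (Ioi 0) := by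
  refine (integrable_inv_one_add_sq.integrableOn).mono' ?_ ?_
  · have hc : Continuous (fun y : ℝ => y * (ε * (y^2+ε) ^ (-3/2 : ℝ))) := by
      have : Continuous (fun y : ℝ => (y^2+ε) ^ (-3/2 : ℝ)) :=
        ((continuous_pow 2).add continuous_const).rpow_const (fun y => Or.inl (show y^2+ε ≠ 0 by positivity))
      exact continuous_id.mul (continuous_const.mul this)
    exact hc.aestronglyMeasurable
  · refine (ae_restrict_iff' measurableSet_Ioi).2 (ae_of_all _ fun y hy => ?_)
    have hy0 : 0 < y := hy
    have hpos : (0:ℝ) < y^2+ε := by positivity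
    have hA : (0:ℝ) ≤ (y^2+ε) ^ (-3/2 : ℝ) := Real.rpow_nonneg hpos.le _
    rw [Real.norm_eq_abs, abs_of_nonneg (by positivity)]
    have h1 : y * (ε * (y^2+ε) ^ (-3/2 : ℝ)) ≤ (y^2+ε) ^ ((1:ℝ)/2) * (ε * (y^2+ε) ^ (-3/2 : ℝ)) :=
      mul_le_mul_of_nonneg_right (le_sqrt_add hε y hy0.le) (by positivity)
    have h2 : (y^2+ε) ^ ((1:ℝ)/2) * (ε * (y^2+ε) ^ (-3/2 : ℝ)) = ε * (y^2+ε) ^ (-1 : ℝ) := by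
      rw [mul_left_comm, ← Real.rpow_add hpos]
      norm_num
    have h3 : ε * (y^2+ε) ^ (-1 : ℝ) ≤ (1+y^2)⁻¹ := by
      rw [Real.rpow_neg_one]
      rw [mul_comm, inv_mul_eq_div, div_le_iff₀ hpos, inv_mul_eq_div,
        le_div_iff₀ (by positivity : (0:ℝ) < 1+y^2)]
      nlinarith [key1 hε hε1 y]
    calc y * (ε * (y^2+ε) ^ (-3/2 : ℝ)) ≤ ε * (y^2+ε) ^ (-1 : ℝ) := h2 ▸ h1
      _ ≤ (1+y^2)⁻¹ := h3

lemma I2 {ε : ℝ} (hε : 0 < ε) (hε1 : ε ≤ 1) :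
    ∫ y in Ioi (0:ℝ), y * (ε * (y^2+ε) ^ (-3/2 : ℝ)) = ε ^ ((1:ℝ)/2) := by
  have hF : ∀ y ∈ Ioi (0:ℝ), HasDerivAt (fun y : ℝ => -ε * ((y^2+ε) ^ (-1/2 : ℝ)))
      (y * (ε * (y^2+ε) ^ (-3/2 : ℝ))) y := by
    intro y _
    have hu : HasDerivAt (fun y : ℝ => y^2+ε) (2*y) y := by
      simpa using (hasDerivAt_pow 2 y).add_const ε
    have hpos : (0:ℝ) < y^2+ε := by positivity
    have hr := (Real.hasDerivAt_rpow_const (p := (-1/2 : ℝ)) (Or.inl hpos.ne')).comp y hu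
    have h2 := hr.const_mul (-ε)
    refine h2.congr_deriv ?_
    rw [show (-1/2 - 1 : ℝ) = -3/2 by norm_num]
    ring
  have htend : Filter.Tendsto (fun y : ℝ => -ε * ((y^2+ε) ^ (-1/2 : ℝ))) Filter.atTop (nhds 0) := by
    have h1 : Filter.Tendsto (fun y : ℝ => y^2+ε) Filter.atTop Filter.atTop :=
      Filter.tendsto_atTop_add_const_right _ ε (Filter.tendsto_pow_atTop two_ne_zero)
    have h2 : Filter.Tendsto (fun x : ℝ => x ^ (-1/2 : ℝ)) Filter.atTop (nhds 0) := by
      have := tendsto_rpow_neg_atTop (y := 1/2) (by norm_num)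
      simpa [neg_div] using this
    simpa using (h2.comp h1).const_mul (-ε)
  have hcont : ContinuousWithinAt (fun y : ℝ => -ε * ((y^2+ε) ^ (-1/2 : ℝ))) (Ici 0) 0 := by
    have hc : Continuous (fun y : ℝ => -ε * ((y^2+ε) ^ (-1/2 : ℝ))) :=
      continuous_const.mul (((continuous_pow 2).add continuous_const).rpow_const
        (fun y => Or.inl (show y^2+ε ≠ 0 by positivity)))
    exact hc.continuousWithinAt
  rw [MeasureTheory.integral_Ioi_of_hasDerivAt_of_tendsto hcont hF (intOn2 hε hε1) htend]
  rw [show (0:ℝ)^2 + ε = ε by norm_num]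
  rw [show ((1:ℝ)/2) = 1 + (-1/2 : ℝ) by norm_num, Real.rpow_add hε, Real.rpow_one]
  simp

lemma gcont {ε : ℝ} (hε : 0 < ε) : Continuous (fun z : ℂ => ε / (‖z‖ ^ 2 + ε) ^ 2) :=
  continuous_const.div (((continuous_norm.pow 2).add continuous_const).pow 2)
    (fun z => by positivity)

lemma g_int {ε : ℝ} (hε : 0 < ε) (hε1 : ε ≤ 1) :
    Integrable (fun z : ℂ => ε / (‖z‖ ^ 2 + ε) ^ 2) := by
  have hint := (integrable_rpow_neg_one_add_norm_sq (E := ℂ) (μ := volume) (r := 4)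
    (by rw [Complex.finrank_real_complex]; norm_num)).const_mul (1/ε)
  refine hint.mono' (gcont hε).aestronglyMeasurable (ae_of_all _ fun z => ?_)
  set t : ℝ := ‖z‖ with ht
  have ht0 : 0 ≤ t := norm_nonneg z
  have hnorm : ‖z‖ = t := rfl
  rw [Real.norm_eq_abs, abs_of_nonneg (by positivity)]
  have he : ((1:ℝ)+t^2) ^ (-4/2 : ℝ) = (((1:ℝ)+t^2)^2)⁻¹ := by
    rw [show (-4/2 : ℝ) = ((-2 : ℤ) : ℝ) by norm_num, Real.rpow_intCast]
    norm_num [zpow_neg]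
  rw [he]
  have key : ε*(1+t^2) ≤ t^2+ε := key1 hε hε1 t
  have key2 : (ε*(1+t^2))^2 ≤ (t^2+ε)^2 := by nlinarith [mul_le_mul key key (by positivity) (by positivity)]
  have : (1:ℝ)/ε * (((1:ℝ)+t^2)^2)⁻¹ = ε / (ε*(1+t^2))^2 := by
    field_simp
  rw [this]
  gcongr

lemma b_cont {ε : ℝ} (hε : 0 < ε) (c : ℝ) :
    Continuous (fun z : ℂ => c * (ε * (‖z‖ ^ 2 + ε) ^ (-3/2 : ℝ))) :=
  continuous_const.mul (continuous_const.mul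
    (((continuous_norm.pow 2).add continuous_const).rpow_const
      (fun z => Or.inl (show ‖z‖^2+ε ≠ 0 by positivity))))

lemma b_int {ε : ℝ} (hε : 0 < ε) (hε1 : ε ≤ 1) (c : ℝ) (hc : 0 ≤ c) :
    Integrable (fun z : ℂ => c * (ε * (‖z‖ ^ 2 + ε) ^ (-3/2 : ℝ))) := by
  have hint := (integrable_rpow_neg_one_add_norm_sq (E := ℂ) (μ := volume) (r := 3)
    (by rw [Complex.finrank_real_complex]; norm_num)).const_mul (c * ε * ε ^ (-3/2 : ℝ))
  refine hint.mono' (b_cont hε c).aestronglyMeasurable (ae_of_all _ fun z => ?_)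
  set t : ℝ := ‖z‖ with ht
  have ht0 : 0 ≤ t := norm_nonneg z
  have hnorm : ‖z‖ = t := rfl
  have hpos : (0:ℝ) < t^2+ε := by positivity
  rw [Real.norm_eq_abs, abs_of_nonneg (by positivity)]
  have key : ε*(1+t^2) ≤ t^2+ε := key1 hε hε1 t
  have h1 : (t^2+ε) ^ (-3/2 : ℝ) ≤ (ε*(1+t^2)) ^ (-3/2 : ℝ) :=
    Real.rpow_le_rpow_of_nonpos (by positivity) key (by norm_num)
  have h2 : (ε*(1+t^2)) ^ (-3/2 : ℝ) = ε ^ (-3/2 : ℝ) * ((1:ℝ)+t^2) ^ (-3/2 : ℝ) :=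
    Real.mul_rpow hε.le (by positivity)
  calc c * (ε * (t^2+ε) ^ (-3/2 : ℝ)) ≤ c * (ε * (ε ^ (-3/2 : ℝ) * ((1:ℝ)+t^2) ^ (-3/2 : ℝ))) := by
        rw [h2] at h1
        exact mul_le_mul_of_nonneg_left (mul_le_mul_of_nonneg_left h1 hε.le) hc
    _ = c * ε * ε ^ (-3/2 : ℝ) * ((1:ℝ)+t^2) ^ (-3/2 : ℝ) := by ring

lemma g_integral {ε : ℝ} (hε : 0 < ε) (hε1 : ε ≤ 1) :
    ∫ z : ℂ, ε / (‖z‖ ^ 2 + ε) ^ 2 = Real.pi := by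
  have h : (fun z : ℂ => ε / (‖z‖ ^ 2 + ε) ^ 2)
      = fun z : ℂ => (fun y : ℝ => ε / (y^2+ε)^2) ‖z‖ := by
    funext z; rfl
  rw [h, radial (fun y : ℝ => ε / (y^2+ε)^2), I1 hε hε1]
  ring

lemma b_integral {ε : ℝ} (hε : 0 < ε) (hε1 : ε ≤ 1) (c : ℝ) :
    ∫ z : ℂ, c * (ε * (‖z‖ ^ 2 + ε) ^ (-3/2 : ℝ))
      = 2 * Real.pi * c * ε ^ ((1:ℝ)/2) := by
  have h : (fun z : ℂ => c * (ε * (‖z‖ ^ 2 + ε) ^ (-3/2 : ℝ)))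
      = fun z : ℂ => (fun y : ℝ => c * (ε * (y^2+ε) ^ (-3/2 : ℝ))) ‖z‖ := by
    funext z; rfl
  rw [h, radial (fun y : ℝ => c * (ε * (y^2+ε) ^ (-3/2 : ℝ)))]
  have h2 : ∀ y : ℝ, y * (c * (ε * (y^2+ε) ^ (-3/2 : ℝ)))
      = c * (y * (ε * (y^2+ε) ^ (-3/2 : ℝ))) := fun y => by ring
  simp_rw [h2]
  rw [MeasureTheory.integral_const_mul, I2 hε hε1]
  ring

lemma pt1 {ε : ℝ} (hε : 0 < ε) (t : ℝ) (ht : 0 ≤ t) :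
    ε * t / (t^2+ε)^2 ≤ ε * (t^2+ε) ^ (-3/2 : ℝ) := by
  have hpos : (0:ℝ) < t^2+ε := by positivity
  have h1 : t ≤ (t^2+ε) ^ ((1:ℝ)/2) := le_sqrt_add hε t ht
  have h2 : ε * (t^2+ε) ^ (-3/2 : ℝ) = ε * (t^2+ε) ^ ((1:ℝ)/2) / (t^2+ε)^2 := by
    rw [eq_div_iff (by positivity), mul_assoc,
      show ((t^2+ε):ℝ)^(2:ℕ) = (t^2+ε) ^ ((2:ℕ):ℝ) from (Real.rpow_natCast _ 2).symm,
      ← Real.rpow_add hpos]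
    norm_num
  rw [h2, div_le_div_iff₀ (by positivity) (by positivity)]
  have : ε * t ≤ ε * (t^2+ε) ^ ((1:ℝ)/2) := mul_le_mul_of_nonneg_left h1 hε.le
  nlinarith [sq_nonneg ((t^2+ε):ℝ), hpos]


/-- For compactly supported Lipschitz `φ : ℂ → ℂ` there is `C > 0` with
`| ∫ ε/(|z|²+ε)² φ dλ − π φ(0) | ≤ C ε^{1/2}` for all `ε ∈ (0,1]`; in particular
the exponent `ω = 1/2` works. -/
theorem stmt6 (φ : ℂ → ℂ) (hsupp : HasCompactSupport φ) (K : NNReal)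
    (hlip : LipschitzWith K φ) :
    ∃ C : ℝ, 0 < C ∧ ∀ ε : ℝ, ε ∈ Ioc (0:ℝ) 1 →
      ‖(∫ z : ℂ, (ε / (‖z‖ ^ 2 + ε) ^ 2 : ℝ) • φ z) - (Real.pi : ℝ) • φ 0‖
        ≤ C * ε ^ (1/2 : ℝ) := by
  obtain ⟨M, hM⟩ := hlip.continuous.bounded_above_of_compact_support hsupp
  refine ⟨2*Real.pi*K + 1, by positivity, ?_⟩
  rintro ε ⟨hε, hε1⟩
  have hg_int := g_int hε hε1
  have hgφ_int : Integrable (fun z : ℂ => (ε / (‖z‖ ^ 2 + ε) ^ 2 : ℝ) • φ z) := by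
    refine (hg_int.const_mul M).mono'
      (((gcont hε).smul hlip.continuous).aestronglyMeasurable) (ae_of_all _ fun z => ?_)
    rw [norm_smul, Real.norm_eq_abs, abs_of_nonneg (by positivity)]
    calc _ ≤ (ε / (‖z‖ ^ 2 + ε) ^ 2) * M :=
          mul_le_mul_of_nonneg_left (hM z) (by positivity)
      _ = M * (ε / (‖z‖ ^ 2 + ε) ^ 2) := by ring
  have hsub_int : Integrable (fun z : ℂ => (ε / (‖z‖ ^ 2 + ε) ^ 2 : ℝ) • (φ z - φ 0)) := by
    have := hgφ_int.sub (hg_int.smul_const (φ 0))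
    simpa [smul_sub, Pi.sub_def] using this
  have hrw : (∫ z : ℂ, (ε / (‖z‖ ^ 2 + ε) ^ 2 : ℝ) • φ z) - (Real.pi : ℝ) • φ 0
      = ∫ z : ℂ, (ε / (‖z‖ ^ 2 + ε) ^ 2 : ℝ) • (φ z - φ 0) := by
    rw [show (Real.pi : ℝ) • φ 0 = ∫ z : ℂ, (ε / (‖z‖ ^ 2 + ε) ^ 2 : ℝ) • φ 0 by
      rw [integral_smul_const, g_integral hε hε1]]
    rw [← integral_sub hgφ_int (hg_int.smul_const (φ 0))]
    simp [smul_sub]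
  rw [hrw]
  have hpt : ∀ z : ℂ, ‖(ε / (‖z‖ ^ 2 + ε) ^ 2 : ℝ) • (φ z - φ 0)‖
      ≤ (K:ℝ) * (ε * (‖z‖ ^ 2 + ε) ^ (-3/2 : ℝ)) := by
    intro z
    have ht0 : 0 ≤ ‖z‖ := norm_nonneg z
    rw [norm_smul, Real.norm_eq_abs, abs_of_nonneg (by positivity)]
    have hφ : ‖φ z - φ 0‖ ≤ (K:ℝ) * ‖z‖ := by
      have h := hlip.dist_le_mul z 0
      rwa [dist_eq_norm, dist_eq_norm, sub_zero] at h
    calc (ε / (‖z‖ ^ 2 + ε) ^ 2) * ‖φ z - φ 0‖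
        ≤ (ε / (‖z‖ ^ 2 + ε) ^ 2) * ((K:ℝ) * ‖z‖) :=
          mul_le_mul_of_nonneg_left hφ (by positivity)
      _ = (K:ℝ) * (ε * ‖z‖ / (‖z‖ ^ 2 + ε) ^ 2) := by ring
      _ ≤ (K:ℝ) * (ε * (‖z‖ ^ 2 + ε) ^ (-3/2 : ℝ)) :=
          mul_le_mul_of_nonneg_left (pt1 hε _ ht0) K.coe_nonneg
  calc ‖∫ z : ℂ, (ε / (‖z‖ ^ 2 + ε) ^ 2 : ℝ) • (φ z - φ 0)‖
      ≤ ∫ z : ℂ, ‖(ε / (‖z‖ ^ 2 + ε) ^ 2 : ℝ) • (φ z - φ 0)‖ :=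
        norm_integral_le_integral_norm _
    _ ≤ ∫ z : ℂ, (K:ℝ) * (ε * (‖z‖ ^ 2 + ε) ^ (-3/2 : ℝ)) :=
        integral_mono hsub_int.norm (b_int hε hε1 K K.coe_nonneg) hpt
    _ = 2 * Real.pi * K * ε ^ ((1:ℝ)/2) := b_integral hε hε1 K
    _ ≤ (2*Real.pi*K + 1) * ε ^ (1/2 : ℝ) := by
        have h0 : (0:ℝ) ≤ ε ^ (1/2:ℝ) := Real.rpow_nonneg hε.le _
        nlinarith
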